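/- For any constants α, β ∈ ℝ with β² ≥ α², the pair f(x,y) = α·ln((r + √(r² + β² - α²))/2) with r = √(x²+y²), and g(x,y) = β·arctan(y/x), solves the minimal surface system G f_xx - 2F f_xy + E f_yy = 0 and G g_xx - 2F g_xy + E g_yy = 0 on the domain {(x,y) : x > 0, x²+y² > max(0, α²-β²)}, where E = 1+f_x²+g_x², F = f_x f_y + g_x g_y, G = 1+f_y²+g_y². -/

import Mathlib

noncomputable def pdx {E : Type*} [NormedAddCommGroup E] [NormedSpace ℝ E]
    (f : ℝ × ℝ → E) : ℝ × ℝ → E := fun p => fderiv ℝ f p (1, 0)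

noncomputable def pdy {E : Type*} [NormedAddCommGroup E] [NormedSpace ℝ E]
    (f : ℝ × ℝ → E) : ℝ × ℝ → E := fun p => fderiv ℝ f p (0, 1)

noncomputable def Ec (f g : ℝ × ℝ → ℝ) : ℝ × ℝ → ℝ :=
  fun p => 1 + (pdx f p) ^ 2 + (pdx g p) ^ 2

noncomputable def Fc (f g : ℝ × ℝ → ℝ) : ℝ × ℝ → ℝ :=
  fun p => pdx f p * pdy f p + pdx g p * pdy g p

noncomputable def Gc (f g : ℝ × ℝ → ℝ) : ℝ × ℝ → ℝ :=
  fun p => 1 + (pdy f p) ^ 2 + (pdy g p) ^ 2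

noncomputable def om (f g : ℝ × ℝ → ℝ) : ℝ × ℝ → ℝ :=
  fun p => Real.sqrt (Ec f g p * Gc f g p - (Fc f g p) ^ 2)

noncomputable def Wg (p : ℝ × ℝ → ℝ) : ℝ × ℝ → ℝ :=
  fun v => Real.sqrt (1 + (pdx p v) ^ 2 + (pdy p v) ^ 2)


open Real ContinuousLinearMap Filter

noncomputable def LQ (v : ℝ × ℝ) : ℝ × ℝ →L[ℝ] ℝ :=
  (2*v.1) • ContinuousLinearMap.fst ℝ ℝ ℝ + (2*v.2) • ContinuousLinearMap.snd ℝ ℝ ℝ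

lemma hQ (v : ℝ × ℝ) : HasFDerivAt (fun w : ℝ×ℝ => w.1^2+w.2^2) (LQ v) v := by
  have h := ((hasFDerivAt_fst (𝕜 := ℝ) (p := v)).mul (hasFDerivAt_fst (𝕜 := ℝ) (p := v))).add
    ((hasFDerivAt_snd (𝕜 := ℝ) (p := v)).mul (hasFDerivAt_snd (𝕜 := ℝ) (p := v)))
  have e : ∀ w : ℝ×ℝ, w.1*w.1 + w.2*w.2 = w.1^2+w.2^2 := fun w => by ring
  simp only [Pi.add_def, Pi.mul_def, e] at h
  refine h.congr_fderiv ?_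
  ext w <;> simp [LQ] <;> ring

lemma hR (v : ℝ × ℝ) (hq : 0 < v.1^2+v.2^2) :
    HasFDerivAt (fun w : ℝ×ℝ => Real.sqrt (w.1^2+w.2^2))
      ((1/(2*Real.sqrt (v.1^2+v.2^2))) • LQ v) v :=
  (Real.hasDerivAt_sqrt hq.ne').comp_hasFDerivAt v (hQ v)

lemma hS (α β : ℝ) (v : ℝ × ℝ) (hqc : 0 < v.1^2+v.2^2+β^2-α^2) :
    HasFDerivAt (fun w : ℝ×ℝ => Real.sqrt (w.1^2+w.2^2+β^2-α^2))
      ((1/(2*Real.sqrt (v.1^2+v.2^2+β^2-α^2))) • LQ v) v := by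
  have e : ∀ w : ℝ × ℝ, w.1^2+w.2^2+β^2-α^2 = w.1^2+w.2^2+(β^2-α^2) := fun w => by ring
  simp only [e]
  exact (Real.hasDerivAt_sqrt (by rw [← e]; exact hqc.ne')).comp_hasFDerivAt v
    ((hQ v).add_const _)

lemma myDiv {A B : ℝ×ℝ → ℝ} {LA LB : ℝ×ℝ →L[ℝ] ℝ} {v : ℝ×ℝ} (hA : HasFDerivAt A LA v)
    (hB : HasFDerivAt B LB v) (h0 : B v ≠ 0) :
    HasFDerivAt (fun w => A w / B w)
      (A v • ((-((B v)^2)⁻¹) • LB) + (B v)⁻¹ • LA) v := by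
  have hinv := (hasDerivAt_inv h0).comp_hasFDerivAt v hB
  simp only [div_eq_mul_inv]
  exact hA.mul hinv

lemma pdx_f (α β : ℝ) (v : ℝ × ℝ) (hq : 0 < v.1^2+v.2^2) (hqc : 0 < v.1^2+v.2^2+β^2-α^2) :
    pdx (fun w : ℝ×ℝ => α * Real.log
      ((Real.sqrt (w.1 ^ 2 + w.2 ^ 2) + Real.sqrt (w.1 ^ 2 + w.2 ^ 2 + β ^ 2 - α ^ 2)) / 2)) v
    = α * v.1 / (Real.sqrt (v.1^2+v.2^2) * Real.sqrt (v.1^2+v.2^2+β^2-α^2)) := by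
  set r := Real.sqrt (v.1^2+v.2^2) with hrdef
  set s := Real.sqrt (v.1^2+v.2^2+β^2-α^2) with hsdef
  have hr0 : 0 < r := Real.sqrt_pos.2 hq
  have hs0 : 0 < s := Real.sqrt_pos.2 (by linarith)
  have hu0 : (r+s)/2 ≠ 0 := by positivity
  have hu := myDiv ((hR v hq).add (hS α β v hqc)) (hasFDerivAt_const (2:ℝ) v) (by norm_num)
  have hlog := (Real.hasDerivAt_log hu0).comp_hasFDerivAt_of_eq v hu rfl
  have hf := hlog.const_mul α
  simp only [Function.comp_def, Pi.add_apply] at hf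
  rw [pdx, hf.fderiv]
  simp [LQ]
  field_simp
  ring

lemma pdy_f (α β : ℝ) (v : ℝ × ℝ) (hq : 0 < v.1^2+v.2^2) (hqc : 0 < v.1^2+v.2^2+β^2-α^2) :
    pdy (fun w : ℝ×ℝ => α * Real.log
      ((Real.sqrt (w.1 ^ 2 + w.2 ^ 2) + Real.sqrt (w.1 ^ 2 + w.2 ^ 2 + β ^ 2 - α ^ 2)) / 2)) v
    = α * v.2 / (Real.sqrt (v.1^2+v.2^2) * Real.sqrt (v.1^2+v.2^2+β^2-α^2)) := by
  set r := Real.sqrt (v.1^2+v.2^2) with hrdef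
  set s := Real.sqrt (v.1^2+v.2^2+β^2-α^2) with hsdef
  have hr0 : 0 < r := Real.sqrt_pos.2 hq
  have hs0 : 0 < s := Real.sqrt_pos.2 (by linarith)
  have hu0 : (r+s)/2 ≠ 0 := by positivity
  have hu := myDiv ((hR v hq).add (hS α β v hqc)) (hasFDerivAt_const (2:ℝ) v) (by norm_num)
  have hlog := (Real.hasDerivAt_log hu0).comp_hasFDerivAt_of_eq v hu rfl
  have hf := hlog.const_mul α
  simp only [Function.comp_def, Pi.add_apply] at hf
  rw [pdy, hf.fderiv]
  simp [LQ]
  field_simp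
  ring

lemma pdx_g (β : ℝ) (v : ℝ × ℝ) (hx : 0 < v.1) :
    pdx (fun w : ℝ×ℝ => β * Real.arctan (w.2 / w.1)) v
    = -(β * v.2) / (v.1^2+v.2^2) := by
  have hdiv := myDiv (hasFDerivAt_snd (𝕜 := ℝ) (p := v)) (hasFDerivAt_fst (𝕜 := ℝ) (p := v)) hx.ne'
  have harc := (Real.hasDerivAt_arctan (v.2/v.1)).comp_hasFDerivAt_of_eq v hdiv rfl
  have hg := harc.const_mul β
  simp only [Function.comp_def] at hg
  rw [pdx, hg.fderiv]
  simp
  have h1 : 1 + (v.2/v.1)^2 ≠ 0 := by positivity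
  field_simp

lemma pdy_g (β : ℝ) (v : ℝ × ℝ) (hx : 0 < v.1) :
    pdy (fun w : ℝ×ℝ => β * Real.arctan (w.2 / w.1)) v
    = β * v.1 / (v.1^2+v.2^2) := by
  have hdiv := myDiv (hasFDerivAt_snd (𝕜 := ℝ) (p := v)) (hasFDerivAt_fst (𝕜 := ℝ) (p := v)) hx.ne'
  have harc := (Real.hasDerivAt_arctan (v.2/v.1)).comp_hasFDerivAt_of_eq v hdiv rfl
  have hg := harc.const_mul β
  simp only [Function.comp_def] at hg
  rw [pdy, hg.fderiv]
  simp
  have h1 : 1 + (v.2/v.1)^2 ≠ 0 := by positivity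
  field_simp

lemma fxx_eval (α β : ℝ) (v : ℝ × ℝ) (hq : 0 < v.1^2+v.2^2) (hqc : 0 < v.1^2+v.2^2+β^2-α^2) :
    (fderiv ℝ (fun w : ℝ×ℝ => α * w.1 /
        (Real.sqrt (w.1^2+w.2^2) * Real.sqrt (w.1^2+w.2^2+β^2-α^2))) v) (1,0)
    = α * ((Real.sqrt (v.1^2+v.2^2))^2 * (Real.sqrt (v.1^2+v.2^2+β^2-α^2))^2
        - v.1^2 * ((Real.sqrt (v.1^2+v.2^2))^2 + (Real.sqrt (v.1^2+v.2^2+β^2-α^2))^2))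
      / ((Real.sqrt (v.1^2+v.2^2))^3 * (Real.sqrt (v.1^2+v.2^2+β^2-α^2))^3) := by
  set r := Real.sqrt (v.1^2+v.2^2) with hrdef
  set s := Real.sqrt (v.1^2+v.2^2+β^2-α^2) with hsdef
  have hr0 : 0 < r := Real.sqrt_pos.2 hq
  have hs0 : 0 < s := Real.sqrt_pos.2 (by linarith)
  have h := myDiv ((hasFDerivAt_fst (𝕜 := ℝ) (p := v)).const_mul α)
    ((hR v hq).mul (hS α β v hqc)) (by simp only [Pi.mul_apply]; exact mul_ne_zero hr0.ne' hs0.ne')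
  simp only [Pi.mul_apply] at h
  rw [h.fderiv]
  simp [LQ]
  field_simp
  ring

lemma fxy_eval (α β : ℝ) (v : ℝ × ℝ) (hq : 0 < v.1^2+v.2^2) (hqc : 0 < v.1^2+v.2^2+β^2-α^2) :
    (fderiv ℝ (fun w : ℝ×ℝ => α * w.1 /
        (Real.sqrt (w.1^2+w.2^2) * Real.sqrt (w.1^2+w.2^2+β^2-α^2))) v) (0,1)
    = -(α * v.1 * v.2 * ((Real.sqrt (v.1^2+v.2^2))^2 + (Real.sqrt (v.1^2+v.2^2+β^2-α^2))^2))
      / ((Real.sqrt (v.1^2+v.2^2))^3 * (Real.sqrt (v.1^2+v.2^2+β^2-α^2))^3) := by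
  set r := Real.sqrt (v.1^2+v.2^2) with hrdef
  set s := Real.sqrt (v.1^2+v.2^2+β^2-α^2) with hsdef
  have hr0 : 0 < r := Real.sqrt_pos.2 hq
  have hs0 : 0 < s := Real.sqrt_pos.2 (by linarith)
  have h := myDiv ((hasFDerivAt_fst (𝕜 := ℝ) (p := v)).const_mul α)
    ((hR v hq).mul (hS α β v hqc)) (by simp only [Pi.mul_apply]; exact mul_ne_zero hr0.ne' hs0.ne')
  simp only [Pi.mul_apply] at h
  rw [h.fderiv]
  simp [LQ]
  field_simp
  ring

lemma fyy_eval (α β : ℝ) (v : ℝ × ℝ) (hq : 0 < v.1^2+v.2^2) (hqc : 0 < v.1^2+v.2^2+β^2-α^2) :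
    (fderiv ℝ (fun w : ℝ×ℝ => α * w.2 /
        (Real.sqrt (w.1^2+w.2^2) * Real.sqrt (w.1^2+w.2^2+β^2-α^2))) v) (0,1)
    = α * ((Real.sqrt (v.1^2+v.2^2))^2 * (Real.sqrt (v.1^2+v.2^2+β^2-α^2))^2
        - v.2^2 * ((Real.sqrt (v.1^2+v.2^2))^2 + (Real.sqrt (v.1^2+v.2^2+β^2-α^2))^2))
      / ((Real.sqrt (v.1^2+v.2^2))^3 * (Real.sqrt (v.1^2+v.2^2+β^2-α^2))^3) := by
  set r := Real.sqrt (v.1^2+v.2^2) with hrdef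
  set s := Real.sqrt (v.1^2+v.2^2+β^2-α^2) with hsdef
  have hr0 : 0 < r := Real.sqrt_pos.2 hq
  have hs0 : 0 < s := Real.sqrt_pos.2 (by linarith)
  have h := myDiv ((hasFDerivAt_snd (𝕜 := ℝ) (p := v)).const_mul α)
    ((hR v hq).mul (hS α β v hqc)) (by simp only [Pi.mul_apply]; exact mul_ne_zero hr0.ne' hs0.ne')
  simp only [Pi.mul_apply] at h
  rw [h.fderiv]
  simp [LQ]
  field_simp
  ring

lemma gxx_eval (β : ℝ) (v : ℝ × ℝ) (hq : 0 < v.1^2+v.2^2) :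
    (fderiv ℝ (fun w : ℝ×ℝ => -(β * w.2) / (w.1^2+w.2^2)) v) (1,0)
    = 2*β*v.1*v.2 / (v.1^2+v.2^2)^2 := by
  have h := myDiv ((hasFDerivAt_snd (𝕜 := ℝ) (p := v)).const_mul β).neg (hQ v) hq.ne'
  simp only [Pi.neg_apply, Pi.mul_apply] at h
  rw [h.fderiv]
  simp [LQ]
  field_simp

lemma gxy_eval (β : ℝ) (v : ℝ × ℝ) (hq : 0 < v.1^2+v.2^2) :
    (fderiv ℝ (fun w : ℝ×ℝ => -(β * w.2) / (w.1^2+w.2^2)) v) (0,1)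
    = β*(v.2^2-v.1^2) / (v.1^2+v.2^2)^2 := by
  have h := myDiv ((hasFDerivAt_snd (𝕜 := ℝ) (p := v)).const_mul β).neg (hQ v) hq.ne'
  simp only [Pi.neg_apply, Pi.mul_apply] at h
  rw [h.fderiv]
  simp [LQ]
  field_simp
  ring

lemma gyy_eval (β : ℝ) (v : ℝ × ℝ) (hq : 0 < v.1^2+v.2^2) :
    (fderiv ℝ (fun w : ℝ×ℝ => β * w.1 / (w.1^2+w.2^2)) v) (0,1)
    = -(2*β*v.1*v.2) / (v.1^2+v.2^2)^2 := by
  have h := myDiv ((hasFDerivAt_fst (𝕜 := ℝ) (p := v)).const_mul β) (hQ v) hq.ne'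
  rw [h.fderiv]
  simp [LQ]
  field_simp

set_option maxHeartbeats 2000000 in
set_option maxRecDepth 100000 in
lemma alg_f (α β x y r s : ℝ) (hr : 0 < r) (hs : 0 < s)
    (hr2 : r^2 = x^2+y^2) (hs2 : s^2 = x^2+y^2+β^2-α^2) :
    (1 + (α*y/(r*s))^2 + (β*x/(x^2+y^2))^2) * (α*(r^2*s^2 - x^2*(r^2+s^2))/(r^3*s^3))
    - 2*((α*x/(r*s))*(α*y/(r*s)) + (-(β*y)/(x^2+y^2))*(β*x/(x^2+y^2)))
        * (-(α*x*y*(r^2+s^2))/(r^3*s^3))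
    + (1 + (α*x/(r*s))^2 + (-(β*y)/(x^2+y^2))^2)
        * (α*(r^2*s^2 - y^2*(r^2+s^2))/(r^3*s^3)) = 0 := by
  have hs2' : s^2 = r^2 + β^2 - α^2 := by rw [hr2]; ring_nf; linarith [hs2]
  rw [← hr2]
  field_simp
  linear_combination α*r^6*s^2 * hs2' - α*(-r^4*s^2*(r^2+s^2) + α^2*r^4*s^2 + β^2*r^2*s^4 - β^2*s^2*(r^2+s^2)*(x^2+y^2+r^2)) * hr2

lemma alg_g (α β x y r s : ℝ) (hr : 0 < r) (hs : 0 < s) (hq : 0 < x^2+y^2) :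
    (1 + (α*y/(r*s))^2 + (β*x/(x^2+y^2))^2) * (2*β*x*y/(x^2+y^2)^2)
    - 2*((α*x/(r*s))*(α*y/(r*s)) + (-(β*y)/(x^2+y^2))*(β*x/(x^2+y^2)))
        * (β*(y^2-x^2)/(x^2+y^2)^2)
    + (1 + (α*x/(r*s))^2 + (-(β*y)/(x^2+y^2))^2) * (-(2*β*x*y)/(x^2+y^2)^2) = 0 := by
  field_simp
  ring

theorem stmt_10 (α β : ℝ) (hβα : α ^ 2 ≤ β ^ 2) (f g : ℝ × ℝ → ℝ)
    (hfdef : f = fun v => α * Real.log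
      ((Real.sqrt (v.1 ^ 2 + v.2 ^ 2) + Real.sqrt (v.1 ^ 2 + v.2 ^ 2 + β ^ 2 - α ^ 2)) / 2))
    (hgdef : g = fun v => β * Real.arctan (v.2 / v.1)) :
    ∀ v : ℝ × ℝ, 0 < v.1 → max 0 (α ^ 2 - β ^ 2) < v.1 ^ 2 + v.2 ^ 2 →
      Gc f g v * pdx (pdx f) v - 2 * Fc f g v * pdy (pdx f) v + Ec f g v * pdy (pdy f) v = 0 ∧
      Gc f g v * pdx (pdx g) v - 2 * Fc f g v * pdy (pdx g) v + Ec f g v * pdy (pdy g) v = 0 := by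
  subst hfdef
  subst hgdef
  intro v hx1 hmax
  have hq : 0 < v.1^2+v.2^2 := lt_of_le_of_lt (le_max_left _ _) hmax
  have hqc : 0 < v.1^2+v.2^2+β^2-α^2 := by
    have h2 := le_max_right 0 (α^2-β^2)
    linarith
  have hU : IsOpen {w : ℝ×ℝ | 0 < w.1 ∧ 0 < w.1^2+w.2^2 ∧ 0 < w.1^2+w.2^2+β^2-α^2} := by
    have h1 : IsOpen {w : ℝ×ℝ | 0 < w.1} := isOpen_lt continuous_const continuous_fst
    have hc2 : Continuous fun w : ℝ×ℝ => w.1^2+w.2^2 :=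
      (continuous_fst.pow 2).add (continuous_snd.pow 2)
    have h2 : IsOpen {w : ℝ×ℝ | 0 < w.1^2+w.2^2} := isOpen_lt continuous_const hc2
    have h3 : IsOpen {w : ℝ×ℝ | 0 < w.1^2+w.2^2+β^2-α^2} :=
      isOpen_lt continuous_const ((hc2.add continuous_const).sub continuous_const)
    exact h1.inter (h2.inter h3)
  have hv : v ∈ {w : ℝ×ℝ | 0 < w.1 ∧ 0 < w.1^2+w.2^2 ∧ 0 < w.1^2+w.2^2+β^2-α^2} :=
    ⟨hx1, hq, hqc⟩
  have hmem := hU.mem_nhds hv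
  have hr0 : 0 < Real.sqrt (v.1^2+v.2^2) := Real.sqrt_pos.2 hq
  have hs0 : 0 < Real.sqrt (v.1^2+v.2^2+β^2-α^2) := Real.sqrt_pos.2 hqc
  have hr2 : (Real.sqrt (v.1^2+v.2^2))^2 = v.1^2+v.2^2 := Real.sq_sqrt hq.le
  have hs2 : (Real.sqrt (v.1^2+v.2^2+β^2-α^2))^2 = v.1^2+v.2^2+β^2-α^2 := Real.sq_sqrt hqc.le
  have hevF1 : pdx (fun w : ℝ×ℝ => α * Real.log
        ((Real.sqrt (w.1 ^ 2 + w.2 ^ 2) + Real.sqrt (w.1 ^ 2 + w.2 ^ 2 + β ^ 2 - α ^ 2)) / 2))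
      =ᶠ[nhds v] fun w : ℝ×ℝ => α * w.1 /
        (Real.sqrt (w.1^2+w.2^2) * Real.sqrt (w.1^2+w.2^2+β^2-α^2)) :=
    Filter.eventuallyEq_of_mem hmem (fun w hw => pdx_f α β w hw.2.1 hw.2.2)
  have hevF2 : pdy (fun w : ℝ×ℝ => α * Real.log
        ((Real.sqrt (w.1 ^ 2 + w.2 ^ 2) + Real.sqrt (w.1 ^ 2 + w.2 ^ 2 + β ^ 2 - α ^ 2)) / 2))
      =ᶠ[nhds v] fun w : ℝ×ℝ => α * w.2 /
        (Real.sqrt (w.1^2+w.2^2) * Real.sqrt (w.1^2+w.2^2+β^2-α^2)) :=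
    Filter.eventuallyEq_of_mem hmem (fun w hw => pdy_f α β w hw.2.1 hw.2.2)
  have hevG1 : pdx (fun w : ℝ×ℝ => β * Real.arctan (w.2 / w.1))
      =ᶠ[nhds v] fun w : ℝ×ℝ => -(β * w.2) / (w.1^2+w.2^2) :=
    Filter.eventuallyEq_of_mem hmem (fun w hw => pdx_g β w hw.1)
  have hevG2 : pdy (fun w : ℝ×ℝ => β * Real.arctan (w.2 / w.1))
      =ᶠ[nhds v] fun w : ℝ×ℝ => β * w.1 / (w.1^2+w.2^2) :=
    Filter.eventuallyEq_of_mem hmem (fun w hw => pdy_g β w hw.1)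
  have e1 := pdx_f α β v hq hqc
  have e2 := pdy_f α β v hq hqc
  have e3 := pdx_g β v hx1
  have e4 := pdy_g β v hx1
  have efxx : pdx (pdx (fun w : ℝ×ℝ => α * Real.log
      ((Real.sqrt (w.1 ^ 2 + w.2 ^ 2) + Real.sqrt (w.1 ^ 2 + w.2 ^ 2 + β ^ 2 - α ^ 2)) / 2))) v
      = α * ((Real.sqrt (v.1^2+v.2^2))^2 * (Real.sqrt (v.1^2+v.2^2+β^2-α^2))^2
        - v.1^2 * ((Real.sqrt (v.1^2+v.2^2))^2 + (Real.sqrt (v.1^2+v.2^2+β^2-α^2))^2))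
      / ((Real.sqrt (v.1^2+v.2^2))^3 * (Real.sqrt (v.1^2+v.2^2+β^2-α^2))^3) := by
    show (fderiv ℝ _ v) (1,0) = _
    rw [hevF1.fderiv_eq]
    exact fxx_eval α β v hq hqc
  have efxy : pdy (pdx (fun w : ℝ×ℝ => α * Real.log
      ((Real.sqrt (w.1 ^ 2 + w.2 ^ 2) + Real.sqrt (w.1 ^ 2 + w.2 ^ 2 + β ^ 2 - α ^ 2)) / 2))) v
      = -(α * v.1 * v.2 * ((Real.sqrt (v.1^2+v.2^2))^2 + (Real.sqrt (v.1^2+v.2^2+β^2-α^2))^2))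
      / ((Real.sqrt (v.1^2+v.2^2))^3 * (Real.sqrt (v.1^2+v.2^2+β^2-α^2))^3) := by
    show (fderiv ℝ _ v) (0,1) = _
    rw [hevF1.fderiv_eq]
    exact fxy_eval α β v hq hqc
  have efyy : pdy (pdy (fun w : ℝ×ℝ => α * Real.log
      ((Real.sqrt (w.1 ^ 2 + w.2 ^ 2) + Real.sqrt (w.1 ^ 2 + w.2 ^ 2 + β ^ 2 - α ^ 2)) / 2))) v
      = α * ((Real.sqrt (v.1^2+v.2^2))^2 * (Real.sqrt (v.1^2+v.2^2+β^2-α^2))^2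
        - v.2^2 * ((Real.sqrt (v.1^2+v.2^2))^2 + (Real.sqrt (v.1^2+v.2^2+β^2-α^2))^2))
      / ((Real.sqrt (v.1^2+v.2^2))^3 * (Real.sqrt (v.1^2+v.2^2+β^2-α^2))^3) := by
    show (fderiv ℝ _ v) (0,1) = _
    rw [hevF2.fderiv_eq]
    exact fyy_eval α β v hq hqc
  have egxx : pdx (pdx (fun w : ℝ×ℝ => β * Real.arctan (w.2 / w.1))) v
      = 2*β*v.1*v.2 / (v.1^2+v.2^2)^2 := by
    show (fderiv ℝ _ v) (1,0) = _
    rw [hevG1.fderiv_eq]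
    exact gxx_eval β v hq
  have egxy : pdy (pdx (fun w : ℝ×ℝ => β * Real.arctan (w.2 / w.1))) v
      = β*(v.2^2-v.1^2) / (v.1^2+v.2^2)^2 := by
    show (fderiv ℝ _ v) (0,1) = _
    rw [hevG1.fderiv_eq]
    exact gxy_eval β v hq
  have egyy : pdy (pdy (fun w : ℝ×ℝ => β * Real.arctan (w.2 / w.1))) v
      = -(2*β*v.1*v.2) / (v.1^2+v.2^2)^2 := by
    show (fderiv ℝ _ v) (0,1) = _
    rw [hevG2.fderiv_eq]
    exact gyy_eval β v hq
  constructor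
  · simp only [Ec, Fc, Gc]
    rw [efxx, efxy, efyy, e1, e2, e3, e4]
    linear_combination alg_f α β v.1 v.2 _ _ hr0 hs0 hr2 (by linarith [hs2])
  · simp only [Ec, Fc, Gc]
    rw [egxx, egxy, egyy, e1, e2, e3, e4]
    linear_combination alg_g α β v.1 v.2 (Real.sqrt (v.1^2+v.2^2))
      (Real.sqrt (v.1^2+v.2^2+β^2-α^2)) hr0 hs0 hq
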